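/- arXiv:2403.03200 — 4 statements merged into one kernel-verified Lean document; each statement's English description precedes it below -/
import Mathlib

section
/- Let n ≥ 1, let Ω ⊆ ℝⁿ be open, let ψ, φ : ℝⁿ → ℝ be twice continuously differentiable on Ω, let ρ̃ : Ω → ℝ and λ ∈ ℝ. Assume that on Ω the function ψ satisfies Δψ + (n−2)·⟪∇φ, ∇ψ⟫ = −λ·ρ̃·e^{2φ}·ψ. Then the function u := e^{((n−2)/2)·φ}·ψ satisfies on Ω the Schrödinger equation −Δu + ( ((n−2)²/4)·‖∇φ‖² + ((n−2)/2)·Δφ )·u = λ·e^{2φ}·ρ̃·u. -/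
open scoped RealInnerProductSpace

/-- The Euclidean Laplacian: the sum of the pure second partial derivatives. -/
noncomputable def laplacian {n : ℕ} (f : EuclideanSpace ℝ (Fin n) → ℝ)
    (x : EuclideanSpace ℝ (Fin n)) : ℝ :=
  ∑ i : Fin n, fderiv ℝ (fderiv ℝ f) x (EuclideanSpace.single i 1) (EuclideanSpace.single i 1)

theorem conformal_eigenfunction_schrodinger_form {n : ℕ} (hn : 1 ≤ n)
    (Ω : Set (EuclideanSpace ℝ (Fin n))) (hΩ : IsOpen Ω)
    (ψ φ : EuclideanSpace ℝ (Fin n) → ℝ)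
    (hψ : ContDiffOn ℝ 2 ψ Ω) (hφ : ContDiffOn ℝ 2 φ Ω)
    (ρ : EuclideanSpace ℝ (Fin n) → ℝ) (lam : ℝ)
    (heq : ∀ x ∈ Ω,
      laplacian ψ x + ((n : ℝ) - 2) * ⟪gradient φ x, gradient ψ x⟫ =
        -lam * ρ x * Real.exp (2 * φ x) * ψ x) :
    ∀ x ∈ Ω,
      -laplacian (fun y => Real.exp (((n : ℝ) - 2) / 2 * φ y) * ψ y) x +
          (((n : ℝ) - 2) ^ 2 / 4 * ‖gradient φ x‖ ^ 2 +
              ((n : ℝ) - 2) / 2 * laplacian φ x) *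
            (Real.exp (((n : ℝ) - 2) / 2 * φ x) * ψ x) =
        lam * Real.exp (2 * φ x) * ρ x *
          (Real.exp (((n : ℝ) - 2) / 2 * φ x) * ψ x) := by
  intro x hx
  set c : ℝ := ((n : ℝ) - 2) / 2 with hc
  have hmem : Ω ∈ nhds x := hΩ.mem_nhds hx
  have hψ2 : ∀ y ∈ Ω, ContDiffAt ℝ 2 ψ y := fun y hy => hψ.contDiffAt (hΩ.mem_nhds hy)
  have hφ2 : ∀ y ∈ Ω, ContDiffAt ℝ 2 φ y := fun y hy => hφ.contDiffAt (hΩ.mem_nhds hy)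
  have hψd : ∀ y ∈ Ω, DifferentiableAt ℝ ψ y := fun y hy =>
    (hψ2 y hy).differentiableAt (by norm_num)
  have hφd : ∀ y ∈ Ω, DifferentiableAt ℝ φ y := fun y hy =>
    (hφ2 y hy).differentiableAt (by norm_num)
  set g : EuclideanSpace ℝ (Fin n) → ℝ := fun y => Real.exp (c * φ y) with hgdef
  have hg2 : ∀ y ∈ Ω, ContDiffAt ℝ 2 g y := fun y hy =>
    (contDiffAt_const.mul (hφ2 y hy)).exp
  have hgd : ∀ y ∈ Ω, DifferentiableAt ℝ g y := fun y hy =>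
    (hg2 y hy).differentiableAt (by norm_num)
  have hgder : ∀ y ∈ Ω, fderiv ℝ g y = (c * g y) • fderiv ℝ φ y := by
    intro y hy
    have h1 : fderiv ℝ (fun z => c * φ z) y = c • fderiv ℝ φ y :=
      fderiv_const_mul (hφd y hy) c
    rw [hgdef]
    rw [fderiv_exp ((hφd y hy).const_mul c), h1, smul_smul, mul_comm]
  -- derivative of the product on Ω
  have huder : ∀ y ∈ Ω, fderiv ℝ (fun z => g z * ψ z) y
      = g y • fderiv ℝ ψ y + ψ y • fderiv ℝ g y := fun y hy =>
    fderiv_fun_mul (hgd y hy) (hψd y hy)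
  have hEq1 : (fderiv ℝ (fun z => g z * ψ z)) =ᶠ[nhds x]
      (fun y => g y • fderiv ℝ ψ y + ψ y • fderiv ℝ g y) :=
    Filter.eventuallyEq_of_mem hmem huder
  have hEq2 : (fderiv ℝ g) =ᶠ[nhds x] (fun y => (c * g y) • fderiv ℝ φ y) :=
    Filter.eventuallyEq_of_mem hmem hgder
  have hψ'd : DifferentiableAt ℝ (fderiv ℝ ψ) x :=
    ((hψ2 x hx).fderiv_right (m := 1) (by norm_num)).differentiableAt one_ne_zero
  have hφ'd : DifferentiableAt ℝ (fderiv ℝ φ) x :=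
    ((hφ2 x hx).fderiv_right (m := 1) (by norm_num)).differentiableAt one_ne_zero
  have hg'd : DifferentiableAt ℝ (fderiv ℝ g) x :=
    ((hg2 x hx).fderiv_right (m := 1) (by norm_num)).differentiableAt one_ne_zero
  -- second derivative of u
  have hDu : fderiv ℝ (fderiv ℝ (fun z => g z * ψ z)) x
      = (g x • fderiv ℝ (fderiv ℝ ψ) x + (fderiv ℝ g x).smulRight (fderiv ℝ ψ x))
        + (ψ x • fderiv ℝ (fderiv ℝ g) x + (fderiv ℝ ψ x).smulRight (fderiv ℝ g x)) := by
    rw [hEq1.fderiv_eq, fderiv_fun_add ((hgd x hx).fun_smul hψ'd) ((hψd x hx).fun_smul hg'd),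
      fderiv_fun_smul (hgd x hx) hψ'd, fderiv_fun_smul (hψd x hx) hg'd]
  have hcg : fderiv ℝ (fun y => c * g y) x = c • fderiv ℝ g x :=
    fderiv_const_mul (hgd x hx) c
  have hDg : fderiv ℝ (fderiv ℝ g) x
      = (c * g x) • fderiv ℝ (fderiv ℝ φ) x
        + (c • fderiv ℝ g x).smulRight (fderiv ℝ φ x) := by
    rw [hEq2.fderiv_eq, fderiv_fun_smul ((hgd x hx).const_mul c) hφ'd, hcg]
  have hgx : fderiv ℝ g x = (c * g x) • fderiv ℝ φ x := hgder x hx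
  -- per-coordinate identity
  have hterm : ∀ i : Fin n,
      fderiv ℝ (fderiv ℝ (fun z => g z * ψ z)) x (EuclideanSpace.single i 1)
          (EuclideanSpace.single i 1)
      = g x * (fderiv ℝ (fderiv ℝ ψ) x (EuclideanSpace.single i 1) (EuclideanSpace.single i 1))
        + 2 * c * g x *
            (fderiv ℝ φ x (EuclideanSpace.single i 1) * fderiv ℝ ψ x (EuclideanSpace.single i 1))
        + ψ x * (c * g x) *
            (fderiv ℝ (fderiv ℝ φ) x (EuclideanSpace.single i 1) (EuclideanSpace.single i 1))
        + ψ x * (c * (c * g x)) * (fderiv ℝ φ x (EuclideanSpace.single i 1)) ^ 2 := by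
    intro i
    rw [hDu, hDg, hgx]
    simp only [ContinuousLinearMap.add_apply, ContinuousLinearMap.smul_apply,
      ContinuousLinearMap.smulRight_apply, smul_eq_mul]
    ring
  -- laplacian of u
  have hlapu : laplacian (fun z => g z * ψ z) x
      = g x * laplacian ψ x
        + 2 * c * g x *
            (∑ i : Fin n,
              fderiv ℝ φ x (EuclideanSpace.single i 1) * fderiv ℝ ψ x (EuclideanSpace.single i 1))
        + ψ x * (c * g x) * laplacian φ x
        + ψ x * (c * (c * g x)) *
            (∑ i : Fin n, (fderiv ℝ φ x (EuclideanSpace.single i 1)) ^ 2) := by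
    unfold laplacian
    rw [Finset.sum_congr rfl (fun i _ => hterm i)]
    simp only [Finset.sum_add_distrib, Finset.mul_sum]
  -- gradient identities
  have hgradf : ∀ (f : EuclideanSpace ℝ (Fin n) → ℝ) (v : EuclideanSpace ℝ (Fin n)),
      ⟪gradient f x, v⟫ = fderiv ℝ f x v := fun f v =>
    InnerProductSpace.toDual_symm_apply
  have hcomp : ∀ (f : EuclideanSpace ℝ (Fin n) → ℝ) (i : Fin n),
      (gradient f x) i = fderiv ℝ f x (EuclideanSpace.single i 1) := by
    intro f i
    rw [← hgradf f (EuclideanSpace.single i 1), EuclideanSpace.inner_single_right]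
    simp
  have hsum : ∀ (a b : EuclideanSpace ℝ (Fin n)), ⟪a, b⟫ = ∑ i : Fin n, a i * b i := by
    intro a b
    simp [PiLp.inner_apply, RCLike.inner_apply, mul_comm]
  have hinner : ⟪gradient φ x, gradient ψ x⟫
      = ∑ i : Fin n,
          fderiv ℝ φ x (EuclideanSpace.single i 1) * fderiv ℝ ψ x (EuclideanSpace.single i 1) := by
    rw [hsum]
    exact Finset.sum_congr rfl fun i _ => by rw [hcomp φ i, hcomp ψ i]
  have hnorm : ‖gradient φ x‖ ^ 2
      = ∑ i : Fin n, (fderiv ℝ φ x (EuclideanSpace.single i 1)) ^ 2 := by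
    rw [← real_inner_self_eq_norm_sq, hsum]
    exact Finset.sum_congr rfl fun i _ => by rw [hcomp φ i]; ring
  have hfun : (fun y => Real.exp (c * φ y) * ψ y) = (fun z => g z * ψ z) := rfl
  have hkey := heq x hx
  rw [hinner] at hkey
  rw [hfun, hlapu, hnorm]
  have hgxval : Real.exp (c * φ x) = g x := rfl
  rw [hgxval, hc]
  linear_combination (-(g x)) * hkey
end

section
/- Let β > 0 and define ρ₀ : ℝ² → ℝ by ρ₀(x) = 4/(1+‖x‖²)². Then the function x ↦ ρ₀(x)^β is concave on the closed convex set {x ∈ ℝ² : ‖x‖² ≤ 1/(1+4β)}. -/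
open Real Set

theorem weight_power_concave (β : ℝ) (hβ : 0 < β) :
    ConcaveOn ℝ {x : EuclideanSpace ℝ (Fin 2) | ‖x‖ ^ 2 ≤ 1 / (1 + 4 * β)}
      (fun x => (4 / (1 + ‖x‖ ^ 2) ^ 2) ^ β) := by
  have h1β : (0:ℝ) < 1 + 4 * β := by linarith
  set R : ℝ := Real.sqrt (1 / (1 + 4 * β)) with hR
  have hRpos : 0 < R := Real.sqrt_pos.mpr (by positivity)
  have hRsq : R ^ 2 = 1 / (1 + 4 * β) := Real.sq_sqrt (by positivity)
  set ψ : ℝ → ℝ := fun r => (4:ℝ)^β * (1 + r^2) ^ (-(2*β)) with hψ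
  set ψ' : ℝ → ℝ := fun r =>
      (4:ℝ)^β * ((-(2*β)) * (1 + r^2) ^ (-(2*β) - 1) * (2*r)) with hψ'
  -- pointwise identity
  have hEq : ∀ r : ℝ, (4 / (1 + r^2) ^ 2) ^ β = ψ r := by
    intro r
    have h : (0:ℝ) < 1 + r^2 := by positivity
    rw [hψ, Real.div_rpow (by norm_num) (by positivity),
      ← Real.rpow_natCast (1 + r^2) 2, ← Real.rpow_mul h.le,
      show ((2:ℕ):ℝ) * β = 2*β by norm_num]
    show (4:ℝ)^β / (1+r^2)^(2*β) = (4:ℝ)^β * (1+r^2)^(-(2*β))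
    rw [Real.rpow_neg h.le]; ring
  -- first derivative
  have hψd : ∀ r : ℝ, HasDerivAt ψ (ψ' r) r := by
    intro r
    have h : (0:ℝ) < 1 + r^2 := by positivity
    have h1 : HasDerivAt (fun r : ℝ => 1 + r^2) (2*r) r := by
      simpa using ((hasDerivAt_pow 2 r).const_add 1)
    have h2 := (Real.hasDerivAt_rpow_const (p := -(2*β)) (Or.inl h.ne')).comp r h1
    simpa [hψ, hψ', mul_assoc] using h2.const_mul ((4:ℝ)^β)
  have hderiv : deriv ψ = ψ' := funext fun r => (hψd r).deriv
  -- second derivative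
  have hψ'd : ∀ r : ℝ, HasDerivAt ψ'
      ((4:ℝ)^β * ((-(2*β)) * ((-(2*β) - 1) * (1 + r^2) ^ (-(2*β) - 1 - 1) * (2*r) * (2*r)
        + (1 + r^2) ^ (-(2*β) - 1) * 2))) r := by
    intro r
    have h : (0:ℝ) < 1 + r^2 := by positivity
    have h1 : HasDerivAt (fun r : ℝ => 1 + r^2) (2*r) r := by
      simpa using ((hasDerivAt_pow 2 r).const_add 1)
    have h2 := (Real.hasDerivAt_rpow_const (p := -(2*β) - 1) (Or.inl h.ne')).comp r h1
    have h3 : HasDerivAt (fun r : ℝ => 2*r) 2 r := by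
      simpa using (hasDerivAt_id r).const_mul (2:ℝ)
    have h4 := h2.mul h3
    have h5 := (h4.const_mul ((4:ℝ)^β * (-(2*β))))
    have hfun : ψ' = fun y => (4:ℝ)^β * (-(2*β)) *
        (((fun x => x ^ (-(2*β) - 1)) ∘ fun r : ℝ => 1 + r^2) y * (2*y)) := by
      funext y; simp only [hψ', Function.comp]; ring
    rw [hfun]
    refine h5.congr_deriv ?_
    simp only [Function.comp]; ring
  -- concavity of ψ on Icc 0 R
  have hIoo : interior (Icc (0:ℝ) R) = Ioo 0 R := interior_Icc
  have hcc : ConcaveOn ℝ (Icc (0:ℝ) R) ψ := by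
    apply concaveOn_of_deriv2_nonpos (convex_Icc _ _)
    · exact fun r _ => (hψd r).continuousAt.continuousWithinAt
    · exact fun r _ => (hψd r).differentiableAt.differentiableWithinAt
    · rw [hderiv]; exact fun r _ => (hψ'd r).differentiableAt.differentiableWithinAt
    · intro r hr
      rw [hIoo] at hr
      have hr2 : r^2 < 1 / (1 + 4*β) := by
        have := hr.2
        calc r^2 < R^2 := by nlinarith [hr.1, hr.2, hRpos]
        _ = _ := hRsq
      have h : (0:ℝ) < 1 + r^2 := by positivity
      have hd2 : deriv^[2] ψ r = (4:ℝ)^β * ((-(2*β)) * ((-(2*β) - 1) * (1 + r^2) ^ (-(2*β) - 1 - 1) * (2*r) * (2*r)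
        + (1 + r^2) ^ (-(2*β) - 1) * 2)) := by
        show deriv (deriv ψ) r = _
        rw [hderiv]; exact (hψ'd r).deriv
      rw [hd2]
      -- bracket is nonneg, coefficient 4^β * (-(2β)) is negative
      have hB : 0 ≤ (-(2*β) - 1) * (1 + r^2) ^ (-(2*β) - 1 - 1) * (2*r) * (2*r)
          + (1 + r^2) ^ (-(2*β) - 1) * 2 := by
        have hsplit : (1 + r^2) ^ (-(2*β) - 1) = (1 + r^2) * (1 + r^2) ^ (-(2*β) - 1 - 1) := by
          conv_lhs => rw [show -(2*β) - 1 = 1 + (-(2*β) - 1 - 1) by ring]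
          rw [Real.rpow_one_add' h.le (by intro hc; nlinarith)]
        rw [hsplit]
        have hpow : (0:ℝ) < (1 + r^2) ^ (-(2*β) - 1 - 1) := Real.rpow_pos_of_pos h _
        have key : 0 ≤ ((-(2*β) - 1) * (2*r) * (2*r) + (1 + r^2) * 2) := by
          have : (1 + 4*β) * r^2 < 1 := by
            rw [lt_div_iff₀ h1β] at hr2; linarith [hr2]
          nlinarith
        nlinarith [mul_nonneg key hpow.le]
      have hC : (4:ℝ)^β * (-(2*β)) ≤ 0 := by
        have : (0:ℝ) < (4:ℝ)^β := Real.rpow_pos_of_pos (by norm_num) _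
        nlinarith
      calc (4:ℝ)^β * ((-(2*β)) * _) = ((4:ℝ)^β * (-(2*β))) * _ := by ring
        _ ≤ 0 := mul_nonpos_of_nonpos_of_nonneg hC hB
  -- ψ antitone on Icc 0 R
  have hanti : AntitoneOn ψ (Icc (0:ℝ) R) := by
    apply antitoneOn_of_deriv_nonpos (convex_Icc _ _)
    · exact fun r _ => (hψd r).continuousAt.continuousWithinAt
    · exact fun r _ => (hψd r).differentiableAt.differentiableWithinAt
    · intro r hr
      rw [hIoo] at hr
      rw [hderiv]
      have h : (0:ℝ) < 1 + r^2 := by positivity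
      have hpow : (0:ℝ) < (1 + r^2) ^ (-(2*β) - 1) := Real.rpow_pos_of_pos h _
      have h4 : (0:ℝ) < (4:ℝ)^β := Real.rpow_pos_of_pos (by norm_num) _
      have hr0 : 0 < r := hr.1
      have hposval : 0 < (4:ℝ)^β * ((2*β) * (1 + r^2) ^ (-(2*β) - 1) * (2*r)) := by positivity
      simp only [hψ']
      nlinarith [hposval]
  -- set equality
  have hset : {x : EuclideanSpace ℝ (Fin 2) | ‖x‖ ^ 2 ≤ 1 / (1 + 4 * β)}
      = Metric.closedBall 0 R := by
    ext x
    simp only [Set.mem_setOf_eq, Metric.mem_closedBall, dist_zero_right]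
    rw [hR, show ‖x‖ ≤ Real.sqrt (1/(1+4*β)) ↔ ‖x‖^2 ≤ 1/(1+4*β) from
      (Real.le_sqrt (norm_nonneg x) (by positivity))]
  constructor
  · rw [hset]; exact convex_closedBall _ _
  · intro x hx y hy a b ha hb hab
    have hxI : ‖x‖ ∈ Icc (0:ℝ) R := by
      refine ⟨norm_nonneg x, ?_⟩
      have := hx
      rw [Set.mem_setOf_eq] at this
      rw [hR]; exact (Real.le_sqrt (norm_nonneg x) (by positivity)).mpr this
    have hyI : ‖y‖ ∈ Icc (0:ℝ) R := by
      refine ⟨norm_nonneg y, ?_⟩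
      have := hy
      rw [Set.mem_setOf_eq] at this
      rw [hR]; exact (Real.le_sqrt (norm_nonneg y) (by positivity)).mpr this
    have hcomb : a * ‖x‖ + b * ‖y‖ ∈ Icc (0:ℝ) R := by
      constructor
      · positivity
      · calc a * ‖x‖ + b * ‖y‖ ≤ a * R + b * R := by
              gcongr <;> [exact hxI.2; exact hyI.2]
          _ = R := by rw [← add_mul, hab, one_mul]
    have hnorm : ‖a • x + b • y‖ ≤ a * ‖x‖ + b * ‖y‖ := by
      calc ‖a • x + b • y‖ ≤ ‖a • x‖ + ‖b • y‖ := norm_add_le _ _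
        _ = a * ‖x‖ + b * ‖y‖ := by
            rw [norm_smul, norm_smul, Real.norm_eq_abs, Real.norm_eq_abs,
              abs_of_nonneg ha, abs_of_nonneg hb]
    have hnI : ‖a • x + b • y‖ ∈ Icc (0:ℝ) R :=
      ⟨norm_nonneg _, hnorm.trans hcomb.2⟩
    simp only [hEq]
    calc a • ψ ‖x‖ + b • ψ ‖y‖ ≤ ψ (a * ‖x‖ + b * ‖y‖) := hcc.2 hxI hyI ha hb hab
      _ ≤ ψ ‖a • x + b • y‖ := hanti hnI hcomb hnorm
end

section
/- Let β > 0 and define g_β : ℝ² → ℝ by g_β(x) = (4/(1+‖x‖²)²)^β. Then for every x ∈ ℝ²: (i) for every y ∈ ℝ² with ⟪x,y⟫ = 0, the second derivative satisfies D²g_β(x)(y,y) = −(4^{1+β}·β/(1+‖x‖²)^{1+2β})·‖y‖²; and (ii) D²g_β(x)(x,x) = (4^{1+β}·β·((1+4β)·‖x‖² − 1)/(1+‖x‖²)^{2(1+β)})·‖x‖². In particular, the eigenvalues of the Hessian of g_β at x are −4^{1+β}β/(1+‖x‖²)^{1+2β} and 4^{1+β}β(−1+(1+4β)‖x‖²)/(1+‖x‖²)^{2(1+β)},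 both of which are negative whenever ‖x‖² < 1/(1+4β). -/
open scoped RealInnerProductSpace

section aux

variable {β : ℝ}

private lemma g_eq (β : ℝ) (z : EuclideanSpace ℝ (Fin 2)) :
    (4 / (1 + ‖z‖ ^ 2) ^ 2) ^ β = (4:ℝ) ^ β * (1 + ‖z‖ ^ 2) ^ (-(2*β)) := by
  have h1 : (0:ℝ) < 1 + ‖z‖ ^ 2 := by positivity
  rw [Real.div_rpow (by norm_num) (by positivity), ← Real.rpow_natCast (1 + ‖z‖^2) 2,
    ← Real.rpow_mul h1.le, div_eq_mul_inv, ← Real.rpow_neg h1.le]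
  norm_num

private lemma rpow_hasDerivAt (A c t : ℝ) (ht : 0 ≤ t) :
    HasDerivAt (fun s : ℝ => A * (1 + s) ^ c) (A * (c * (1 + t) ^ (c - 1))) t := by
  have h1 : (1:ℝ) + t ≠ 0 := by positivity
  have := (Real.hasDerivAt_rpow_const (p := c) (Or.inl h1)).comp t
    ((hasDerivAt_id t).const_add 1)
  simpa using this.const_mul A

private lemma firstDeriv (β : ℝ) (x : EuclideanSpace ℝ (Fin 2)) :
    HasFDerivAt (fun z : EuclideanSpace ℝ (Fin 2) => (4 / (1 + ‖z‖ ^ 2) ^ 2) ^ β)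
      ((((4:ℝ)^β * ((-(2*β)) * (1 + ‖x‖^2) ^ (-(2*β) - 1))) * 2) • innerSL ℝ x) x := by
  have hg : (fun z : EuclideanSpace ℝ (Fin 2) => (4 / (1 + ‖z‖ ^ 2) ^ 2) ^ β)
      = fun z => (4:ℝ)^β * (1 + ‖z‖^2) ^ (-(2*β)) := funext fun z => g_eq β z
  rw [hg]
  have h1 : HasFDerivAt (fun z : EuclideanSpace ℝ (Fin 2) => ‖z‖^2)
      (2 • innerSL ℝ x) x := (hasStrictFDerivAt_norm_sq x).hasFDerivAt
  have h2 := rpow_hasDerivAt ((4:ℝ)^β) (-(2*β)) (‖x‖^2) (by positivity)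
  have h3 := h2.comp_hasFDerivAt x h1
  have heq : ((4:ℝ)^β * (-(2*β) * (1 + ‖x‖^2) ^ (-(2*β) - 1))) • (2 • innerSL ℝ x)
      = (((4:ℝ)^β * ((-(2*β)) * (1 + ‖x‖^2) ^ (-(2*β) - 1))) * 2) • innerSL ℝ x := by
    ext y; simp [two_smul]; ring
  rw [heq] at h3
  exact h3

end aux

theorem hessian_of_conformal_weight_power (β : ℝ) (hβ : 0 < β)
    (x : EuclideanSpace ℝ (Fin 2)) :
    (∀ y : EuclideanSpace ℝ (Fin 2), ⟪x, y⟫ = 0 →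
        fderiv ℝ (fderiv ℝ (fun z : EuclideanSpace ℝ (Fin 2) =>
            (4 / (1 + ‖z‖ ^ 2) ^ 2) ^ β)) x y y =
          -((4 : ℝ) ^ (1 + β) * β / (1 + ‖x‖ ^ 2) ^ (1 + 2 * β)) * ‖y‖ ^ 2) ∧
      fderiv ℝ (fderiv ℝ (fun z : EuclideanSpace ℝ (Fin 2) =>
          (4 / (1 + ‖z‖ ^ 2) ^ 2) ^ β)) x x x =
        (4 : ℝ) ^ (1 + β) * β * ((1 + 4 * β) * ‖x‖ ^ 2 - 1) /
            (1 + ‖x‖ ^ 2) ^ (2 * (1 + β)) * ‖x‖ ^ 2 ∧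
      (‖x‖ ^ 2 < 1 / (1 + 4 * β) →
        -((4 : ℝ) ^ (1 + β) * β / (1 + ‖x‖ ^ 2) ^ (1 + 2 * β)) < 0 ∧
          (4 : ℝ) ^ (1 + β) * β * (-1 + (1 + 4 * β) * ‖x‖ ^ 2) /
              (1 + ‖x‖ ^ 2) ^ (2 * (1 + β)) < 0) := by
  set K : ℝ := (4:ℝ)^β * (-(2*β)) * 2 with hK
  have hs : (0:ℝ) ≤ ‖x‖^2 := by positivity
  have h1 : (0:ℝ) < 1 + ‖x‖^2 := by positivity
  -- first derivative as a function
  have hgd : fderiv ℝ (fun z : EuclideanSpace ℝ (Fin 2) => (4 / (1 + ‖z‖ ^ 2) ^ 2) ^ β)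
      = fun z => (K * (1 + ‖z‖^2) ^ (-(2*β) - 1)) • innerSL ℝ z := by
    funext z
    rw [(firstDeriv β z).fderiv]
    congr 1
    rw [hK]; ring
  -- second derivative
  have hc : HasFDerivAt (fun z : EuclideanSpace ℝ (Fin 2) => K * (1 + ‖z‖^2) ^ (-(2*β) - 1))
      ((K * ((-(2*β) - 1) * (1 + ‖x‖^2) ^ (-(2*β) - 1 - 1))) • (2 • innerSL ℝ x)) x :=
    by have := (rpow_hasDerivAt K (-(2*β) - 1) (‖x‖^2) hs).comp_hasFDerivAt x
        (hasStrictFDerivAt_norm_sq x).hasFDerivAt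
       exact this
  have hinner : HasFDerivAt (fun z : EuclideanSpace ℝ (Fin 2) => innerSL ℝ z)
      (innerSL ℝ) x := (innerSL ℝ).hasFDerivAt
  have h2 : HasFDerivAt (fun z : EuclideanSpace ℝ (Fin 2) =>
      (K * (1 + ‖z‖^2) ^ (-(2*β) - 1)) • innerSL ℝ z) _ x := hc.smul hinner
  have hD := h2.fderiv
  -- useful rpow facts
  have h4 : (4:ℝ)^(1+β) = 4 * (4:ℝ)^β := by
    rw [Real.rpow_add (by norm_num : (0:ℝ) < 4), Real.rpow_one]
  have hu : (0:ℝ) < (1 + ‖x‖^2) ^ (-(2*β) - 1 - 1) := Real.rpow_pos_of_pos h1 _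
  have hA : (1 + ‖x‖^2) ^ (-(2*β) - 1) = (1 + ‖x‖^2) * (1 + ‖x‖^2) ^ (-(2*β) - 1 - 1) := by
    rw [← Real.rpow_one_add' (by positivity) (by intro h; nlinarith [Real.rpow_natCast (1:ℝ) 1])]
    ring_nf
  have hB : (1 + ‖x‖^2) ^ (2*(1+β)) = ((1 + ‖x‖^2) ^ (-(2*β) - 1 - 1))⁻¹ := by
    rw [show (2*(1+β)) = -(-(2*β) - 1 - 1) by ring, Real.rpow_neg h1.le]
  have hC : (1 + ‖x‖^2) ^ (1 + 2*β) = ((1 + ‖x‖^2) ^ (-(2*β) - 1))⁻¹ := by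
    rw [show (1 + 2*β) = -(-(2*β) - 1) by ring, Real.rpow_neg h1.le]
  have hu1 : (0:ℝ) < (1 + ‖x‖^2) ^ (-(2*β) - 1) := Real.rpow_pos_of_pos h1 _
  refine ⟨?_, ?_, ?_⟩
  · intro y hxy
    rw [hgd, hD]
    simp only [ContinuousLinearMap.add_apply, ContinuousLinearMap.smul_apply,
      ContinuousLinearMap.smulRight_apply, innerSL_apply_apply, hxy, smul_eq_mul,
      real_inner_self_eq_norm_sq, mul_zero, zero_mul, add_zero]
    have key : K * (1 + ‖x‖^2) ^ (-(2*β) - 1)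
        = -((4:ℝ)^(1+β) * β / (1 + ‖x‖^2) ^ (1+2*β)) := by
      rw [h4, hC, hK, div_eq_mul_inv, inv_inv]
      ring
    rw [key]
    congr 1
    exact real_inner_self_eq_norm_sq y
  · rw [hgd, hD]
    simp only [ContinuousLinearMap.add_apply, ContinuousLinearMap.smul_apply,
      ContinuousLinearMap.smulRight_apply, innerSL_apply_apply, smul_eq_mul,
      real_inner_self_eq_norm_sq, nsmul_eq_mul, Nat.cast_ofNat]
    have hxx : (innerSL ℝ x) x = ‖x‖^2 := real_inner_self_eq_norm_sq x
    rw [hxx]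
    rw [h4, hB, hA, hK, div_eq_mul_inv, inv_inv]
    ring
  · intro hlt
    have h14 : (0:ℝ) < 1 + 4*β := by linarith
    have hnum : (1 + 4*β) * ‖x‖^2 < 1 := by
      rw [lt_div_iff₀ h14] at hlt; linarith
    constructor
    · have : (0:ℝ) < (4:ℝ)^(1+β) * β / (1 + ‖x‖^2) ^ (1 + 2*β) := by
        apply div_pos (mul_pos (Real.rpow_pos_of_pos (by norm_num) _) hβ)
          (Real.rpow_pos_of_pos h1 _)
      linarith
    · apply div_neg_of_neg_of_pos
      · apply mul_neg_of_pos_of_neg (mul_pos (Real.rpow_pos_of_pos (by norm_num) _) hβ)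
        linarith
      · exact Real.rpow_pos_of_pos h1 _
end

section
/- Let Ω ⊆ ℝⁿ be open, let u₁, u₂ : ℝⁿ → ℝ be twice continuously differentiable on Ω with u₁ > 0 on Ω, let V, ρ : Ω → ℝ and λ₁, λ₂ ∈ ℝ, and assume that on Ω: −Δu₁ + V·u₁ = λ₁·ρ·u₁ and −Δu₂ + V·u₂ = λ₂·ρ·u₂. Then the ratio w := u₂/u₁ satisfies on Ω the equation Δw + 2·⟪∇(log u₁), ∇w⟫ = −(λ₂ − λ₁)·ρ·w. -/
open scoped RealInnerProductSpace

section aux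

variable {E : Type*} [NormedAddCommGroup E] [NormedSpace ℝ E] {f g : E → ℝ} {x : E}

lemma fderiv2_mul (hf : ContDiffAt ℝ 2 f x) (hg : ContDiffAt ℝ 2 g x) (v : E) :
    fderiv ℝ (fderiv ℝ (fun y => f y * g y)) x v v =
      fderiv ℝ (fderiv ℝ f) x v v * g x
        + 2 * (fderiv ℝ f x v * fderiv ℝ g x v)
        + f x * fderiv ℝ (fderiv ℝ g) x v v := by
  have hf' : DifferentiableAt ℝ f x := hf.differentiableAt two_ne_zero
  have hg' : DifferentiableAt ℝ g x := hg.differentiableAt two_ne_zero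
  have hDf : DifferentiableAt ℝ (fderiv ℝ f) x :=
    (hf.fderiv_right (m := 1) (by norm_num)).differentiableAt one_ne_zero
  have hDg : DifferentiableAt ℝ (fderiv ℝ g) x :=
    (hg.fderiv_right (m := 1) (by norm_num)).differentiableAt one_ne_zero
  have heq : fderiv ℝ (fun y => f y * g y)
      =ᶠ[nhds x] fun y => f y • fderiv ℝ g y + g y • fderiv ℝ f y := by
    filter_upwards [hf.eventually (by norm_num), hg.eventually (by norm_num)] with y hfy hgy
    exact fderiv_mul (hfy.differentiableAt two_ne_zero) (hgy.differentiableAt two_ne_zero)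
  rw [heq.fderiv_eq, fderiv_fun_add (f := fun y => f y • fderiv ℝ g y) (g := fun y => g y • fderiv ℝ f y) (hf'.smul hDg) (hg'.smul hDf),
    fderiv_fun_smul hf' hDg, fderiv_fun_smul hg' hDf]
  simp only [ContinuousLinearMap.add_apply, ContinuousLinearMap.smul_apply,
    ContinuousLinearMap.smulRight_apply, smul_eq_mul]
  ring

end aux

lemma gradient_inner_eq {n : ℕ} (f : EuclideanSpace ℝ (Fin n) → ℝ)
    (x v : EuclideanSpace ℝ (Fin n)) :
    ⟪gradient f x, v⟫ = fderiv ℝ f x v := by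
  simp [gradient, InnerProductSpace.toDual_symm_apply]

lemma gradient_apply {n : ℕ} (f : EuclideanSpace ℝ (Fin n) → ℝ)
    (x : EuclideanSpace ℝ (Fin n)) (i : Fin n) :
    gradient f x i = fderiv ℝ f x (EuclideanSpace.single i 1) := by
  rw [← gradient_inner_eq]
  rw [real_inner_comm, EuclideanSpace.inner_single_left]
  simp

lemma laplacian_mul {n : ℕ} {f g : EuclideanSpace ℝ (Fin n) → ℝ} {x : EuclideanSpace ℝ (Fin n)}
    (hf : ContDiffAt ℝ 2 f x) (hg : ContDiffAt ℝ 2 g x) :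
    laplacian (fun y => f y * g y) x
      = laplacian f x * g x + 2 * ⟪gradient f x, gradient g x⟫ + f x * laplacian g x := by
  have hinner : ⟪gradient f x, gradient g x⟫
      = ∑ i : Fin n, fderiv ℝ f x (EuclideanSpace.single i 1)
          * fderiv ℝ g x (EuclideanSpace.single i 1) := by
    rw [PiLp.inner_apply]
    refine Finset.sum_congr rfl fun i _ => ?_
    simp [gradient_apply, mul_comm]
  simp only [laplacian, hinner]
  rw [Finset.sum_congr rfl fun i _ => fderiv2_mul hf hg (EuclideanSpace.single i 1)]
  rw [Finset.sum_add_distrib, Finset.sum_add_distrib, ← Finset.sum_mul, ← Finset.mul_sum,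
    ← Finset.mul_sum]

theorem ratio_of_eigenfunctions_equation {n : ℕ}
    (Ω : Set (EuclideanSpace ℝ (Fin n))) (hΩ : IsOpen Ω)
    (u₁ u₂ : EuclideanSpace ℝ (Fin n) → ℝ)
    (h₁ : ContDiffOn ℝ 2 u₁ Ω) (h₂ : ContDiffOn ℝ 2 u₂ Ω)
    (hpos : ∀ x ∈ Ω, 0 < u₁ x)
    (V ρ : EuclideanSpace ℝ (Fin n) → ℝ) (lam₁ lam₂ : ℝ)
    (heq₁ : ∀ x ∈ Ω, -laplacian u₁ x + V x * u₁ x = lam₁ * ρ x * u₁ x)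
    (heq₂ : ∀ x ∈ Ω, -laplacian u₂ x + V x * u₂ x = lam₂ * ρ x * u₂ x) :
    ∀ x ∈ Ω,
      laplacian (fun y => u₂ y / u₁ y) x +
          2 * ⟪gradient (fun y => Real.log (u₁ y)) x,
              gradient (fun y => u₂ y / u₁ y) x⟫ =
        -((lam₂ - lam₁) * ρ x * (u₂ x / u₁ x)) := by
  intro x hx
  set w : EuclideanSpace ℝ (Fin n) → ℝ := fun y => u₂ y / u₁ y with hw_def
  have hne : u₁ x ≠ 0 := (hpos x hx).ne'
  have hu1 : ContDiffAt ℝ 2 u₁ x := h₁.contDiffAt (hΩ.mem_nhds hx)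
  have hu2 : ContDiffAt ℝ 2 u₂ x := h₂.contDiffAt (hΩ.mem_nhds hx)
  have hw : ContDiffAt ℝ 2 w x := hu2.div hu1 hne
  -- u₂ = u₁ * w near x
  have hloc : (fun y => u₁ y * w y) =ᶠ[nhds x] u₂ := by
    filter_upwards [hΩ.mem_nhds hx] with y hy
    exact mul_div_cancel₀ (u₂ y) (hpos y hy).ne'
  have hlap : laplacian u₂ x = laplacian (fun y => u₁ y * w y) x := by
    unfold laplacian
    refine Finset.sum_congr rfl fun i _ => ?_
    rw [hloc.fderiv.fderiv_eq]
  -- the product rule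
  have hprod := laplacian_mul hu1 hw
  rw [← hlap] at hprod
  -- eigen equations
  have e1 : laplacian u₁ x = V x * u₁ x - lam₁ * ρ x * u₁ x := by
    have := heq₁ x hx; linarith
  have e2 : laplacian u₂ x = V x * u₂ x - lam₂ * ρ x * u₂ x := by
    have := heq₂ x hx; linarith
  -- gradient of log
  have hlog : gradient (fun y => Real.log (u₁ y)) x = (u₁ x)⁻¹ • gradient u₁ x := by
    have hfd : HasFDerivAt (fun y => Real.log (u₁ y)) ((u₁ x)⁻¹ • fderiv ℝ u₁ x) x :=
      (Real.hasDerivAt_log hne).comp_hasFDerivAt x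
        (hu1.differentiableAt two_ne_zero).hasFDerivAt
    simp only [gradient, hfd.fderiv, map_smul]
  rw [hlog, real_inner_smul_left]
  -- algebra
  have hu2x : u₂ x = u₁ x * w x := (mul_div_cancel₀ (u₂ x) hne).symm
  rw [e1, e2, hu2x] at hprod
  set I : ℝ := ⟪gradient u₁ x, gradient w x⟫ with hI
  have h1 : u₁ x * (2 * ((u₁ x)⁻¹ * I)) = 2 * I := by
    field_simp
  have key : u₁ x * (laplacian w x + 2 * ((u₁ x)⁻¹ * I))
      = u₁ x * (-((lam₂ - lam₁) * ρ x * w x)) := by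
    rw [mul_add, h1]
    linear_combination -hprod
  have h := mul_left_cancel₀ hne key
  simpa only [hw_def] using h
end
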